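/- arXiv:2510.00929 — 3 statements merged into one kernel-verified Lean document; each statement's English description precedes it below -/
import Mathlib

section
/- Let G be a group of orthogonal matrices T_g on ℝ^n, φ : ℝ^n → ℝ^n a G-equivariant map, d : ℝ^m × ℝ^m → ℝ a differentiable data-fidelity function in its first argument, and γ ∈ ℝ. Define the unrolled iteration x_0(y, A) = 0 and x_{k+1}(y, A) = φ(x_k(y, A) − γ Aᵀ ∇₁d(A x_k(y, A), y)), where ∇₁d denotes the gradient of d with respect to its first argument. Then for every k, x_k(y, A T_g) = T_g⁻¹ x_k(y, A); in particular f(y, A) = x_L(y, A) is an equivariant reconstructor. -/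
open Matrix

/-- The unrolled iteration x_0 = 0,
x_{k+1}(y,A) = φ(x_k(y,A) − γ Aᵀ ∇₁d(A x_k(y,A), y)), with φ G-equivariant,
satisfies x_k(y, A T_g) = T_{g⁻¹} x_k(y, A) for every k; in particular
f(y,A) = x_L(y,A) is an equivariant reconstructor. -/
theorem stmt6 {G : Type*} [Group G] {m n : ℕ}
    (T : G → Matrix (Fin n) (Fin n) ℝ)
    (hT : ∀ g, (T g)ᵀ * T g = 1)
    (hT1 : T 1 = 1)
    (hTmul : ∀ g h, T g * T h = T (g * h))
    (φ : (Fin n → ℝ) → (Fin n → ℝ))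
    (hφ : ∀ (g : G) (x : Fin n → ℝ), φ ((T g).mulVec x) = (T g).mulVec (φ x))
    (γ : ℝ)
    (grad : (Fin m → ℝ) → (Fin m → ℝ) → (Fin m → ℝ))  -- ∇₁d(·, ·)
    (seq : (Fin m → ℝ) → Matrix (Fin m) (Fin n) ℝ → ℕ → (Fin n → ℝ))
    (h0 : ∀ y A, seq y A 0 = 0)
    (hstep : ∀ y A k, seq y A (k + 1) =
      φ (seq y A k - γ • Aᵀ.mulVec (grad (A.mulVec (seq y A k)) y))) :
    ∀ (k : ℕ) (y : Fin m → ℝ) (A : Matrix (Fin m) (Fin n) ℝ) (g : G),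
      seq y (A * T g) k = (T g⁻¹).mulVec (seq y A k) := by
  -- T g⁻¹ = (T g)ᵀ since both are left inverses of T g
  have hinv : ∀ g : G, T g⁻¹ = (T g)ᵀ := by
    intro g
    have h1 : T g⁻¹ * T g = 1 := by rw [hTmul, inv_mul_cancel, hT1]
    have h2 : T g * T g⁻¹ = 1 := by rw [hTmul, mul_inv_cancel, hT1]
    calc T g⁻¹ = T g⁻¹ * (T g * (T g)ᵀ) := by
            rw [mul_eq_one_comm.mp (hT g), mul_one]
      _ = (T g⁻¹ * T g) * (T g)ᵀ := by rw [mul_assoc]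
      _ = (T g)ᵀ := by rw [h1, one_mul]
  have hcancel : ∀ g : G, T g * T g⁻¹ = 1 := by
    intro g; rw [hTmul, mul_inv_cancel, hT1]
  intro k
  induction k with
  | zero => intro y A g; simp [h0]
  | succ k ih =>
    intro y A g
    rw [hstep, hstep, ih]
    have hAg : (A * T g).mulVec ((T g⁻¹).mulVec (seq y A k)) = A.mulVec (seq y A k) := by
      rw [mulVec_mulVec, Matrix.mul_assoc, hcancel, Matrix.mul_one]
    rw [hAg]
    have harg : (T g⁻¹).mulVec (seq y A k) -
        γ • (A * T g)ᵀ.mulVec (grad (A.mulVec (seq y A k)) y) =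
        (T g⁻¹).mulVec (seq y A k - γ • Aᵀ.mulVec (grad (A.mulVec (seq y A k)) y)) := by
      rw [transpose_mul, ← hinv, ← mulVec_mulVec, mulVec_sub, mulVec_smul]
    rw [harg, hφ g⁻¹]
end

section
/- Let G be a finite group of orthogonal matrices T_g on ℝ^n, and suppose f(y₁, A₁) = Q₁† Q₁ E[x | y₁, A₁] + (I − Q₁†Q₁) v(y₁) for every split (y₁, A₁), where Q₁ := Q_{A₁} is symmetric PSD. If Q̄_A := E_{A₁|A}[Q_{A₁}] is invertible, then the averaged estimator f̄(y, A) := E_{y₁,A₁|y,A}[Q̄_A⁻¹ Q_{A₁} f(y₁, A₁)] satisfies f̄(y, A) = E_{y₁,A₁|y,A}[Q̄_A⁻¹ Q_{A₁} E[x | y₁, A₁]]. -/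
open Matrix BigOperators

/-- B is the Moore–Penrose pseudoinverse of A: the four Penrose conditions. -/
def IsMoorePenrose {n : ℕ} (A B : Matrix (Fin n) (Fin n) ℝ) : Prop :=
  A * B * A = A ∧ B * A * B = B ∧ (A * B)ᵀ = A * B ∧ (B * A)ᵀ = B * A

/-- Proposition 1 of the paper: if each split estimator has the form
f₁ = Q₁†Q₁ E[x|y₁,A₁] + (I − Q₁†Q₁) v(y₁) and Q̄ = E[Q₁] is invertible, then the averaged
estimator f̄ = E[Q̄⁻¹ Q₁ f₁] equals the convex combination E[Q̄⁻¹ Q₁ E[x|y₁,A₁]]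
(the arbitrary nullspace components are annihilated). -/
theorem stmt13 {n : ℕ} {ι : Type*} [Fintype ι]
    (p : ι → ℝ) (hp : ∀ j, 0 ≤ p j) (hp1 : ∑ j, p j = 1)
    (Q : ι → Matrix (Fin n) (Fin n) ℝ) (hQ : ∀ j, (Q j).PosSemidef)
    (Qd : ι → Matrix (Fin n) (Fin n) ℝ) (hQd : ∀ j, IsMoorePenrose (Q j) (Qd j))
    (e v : ι → Fin n → ℝ)
    (f : ι → Fin n → ℝ)
    (hf : ∀ j, f j = (Qd j * Q j).mulVec (e j) +
      ((1 : Matrix (Fin n) (Fin n) ℝ) - Qd j * Q j).mulVec (v j))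
    (Qbar : Matrix (Fin n) (Fin n) ℝ) (hQbar : Qbar = ∑ j, p j • Q j)
    (hinv : IsUnit Qbar) :
    ∑ j, p j • (Qbar⁻¹ * Q j).mulVec (f j) = ∑ j, p j • (Qbar⁻¹ * Q j).mulVec (e j) := by
  refine Finset.sum_congr rfl fun j _ => ?_
  congr 1
  have h1 : Q j * (Qd j * Q j) = Q j := by
    have := (hQd j).1; rw [← mul_assoc]; exact this
  rw [hf j]
  rw [← Matrix.mulVec_mulVec, ← Matrix.mulVec_mulVec]
  rw [← Matrix.mulVec_mulVec (e j)]
  congr 1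
  rw [Matrix.mulVec_add, Matrix.mulVec_mulVec, Matrix.mulVec_mulVec, (hQd j).1, Matrix.mulVec_mulVec,
    Matrix.mul_sub, mul_one, ← mul_assoc, (hQd j).1, sub_self, Matrix.zero_mulVec,
    add_zero]
end

section
/- Under the assumptions that the law of x is G-invariant, the law of A is G-invariant under right multiplication by T_g, x and A are independent, and p(y | A, x) = p(y | Ax), the MMSE reconstructor f(y, A) = E[x | y, A] is equivariant: f(y, A T_g) = T_g⁻¹ f(y, A) for all y, A, g. -/
open Matrix MeasureTheory

/-- part 5 of Theorem 2: under a G-invariant signal density px, an operator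
density pA invariant under right multiplication by T_g, and a likelihood depending on (A,x)
only through A x, the MMSE reconstructor written via Bayes' rule,
f(y, A) = (∫ ℓ(y|Ax) pA(A) px(x) dx)⁻¹ • ∫ (ℓ(y|Ax) pA(A) px(x)) • x dx,
is equivariant: f(y, A T_g) = T_{g⁻¹} f(y, A). -/
theorem stmt18 {G : Type*} [Group G] {n m : ℕ}
    (T : G → Matrix (Fin n) (Fin n) ℝ)
    (hT : ∀ g, (T g)ᵀ * T g = 1)
    (hT1 : T 1 = 1)
    (hTmul : ∀ g h, T g * T h = T (g * h))
    (px : (Fin n → ℝ) → ℝ) (hpx : ∀ (g : G) (x : Fin n → ℝ), px ((T g).mulVec x) = px x)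
    (pA : Matrix (Fin m) (Fin n) ℝ → ℝ)
    (hpA : ∀ (A : Matrix (Fin m) (Fin n) ℝ) (g : G), pA (A * T g) = pA A)
    (ℓ : (Fin m → ℝ) → (Fin m → ℝ) → ℝ)  -- likelihood p(y | A x)
    (f : (Fin m → ℝ) → Matrix (Fin m) (Fin n) ℝ → (Fin n → ℝ))
    (hf : ∀ y A, f y A =
      (∫ x : Fin n → ℝ, ℓ y (A.mulVec x) * pA A * px x)⁻¹ •
        ∫ x : Fin n → ℝ, (ℓ y (A.mulVec x) * pA A * px x) • x) :
    ∀ (y : Fin m → ℝ) (A : Matrix (Fin m) (Fin n) ℝ) (g : G),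
      f y (A * T g) = (T g⁻¹).mulVec (f y A) := by
  intro y A g
  -- inverses
  have hinv : ∀ h : G, T h * T h⁻¹ = 1 := fun h => by rw [hTmul, mul_inv_cancel, hT1]
  have hinv' : ∀ h : G, T h⁻¹ * T h = 1 := fun h => by rw [hTmul, inv_mul_cancel, hT1]
  -- determinant has absolute value 1
  have hdet : ∀ h : G, |(T h).det| = 1 := by
    intro h
    have : (T h).det * (T h).det = 1 := by
      have := congrArg Matrix.det (hT h)
      simpa [Matrix.det_mul, Matrix.det_transpose] using this
    nlinarith [abs_nonneg ((T h).det), sq_abs ((T h).det), abs_mul ((T h).det) ((T h).det)]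
  have hdet0 : ∀ h : G, (T h).det ≠ 0 := by
    intro h h0
    have := hdet h
    rw [h0, abs_zero] at this; norm_num at this
  -- the linear equivalence given by T g
  have key : ∀ (h : G) (F : (Fin n → ℝ) → (Fin n → ℝ)),
      ∫ x : Fin n → ℝ, F ((T h).mulVec x) = ∫ x : Fin n → ℝ, F x := by
    intro h F
    have hmp : MeasurePreserving (Matrix.toLin' (T h)) volume volume := by
      constructor
      · exact (Matrix.toLin' (T h)).continuous_of_finiteDimensional.measurable
      · rw [Real.map_matrix_volume_pi_eq_smul_volume_pi (hdet0 h)]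
        rw [abs_inv, hdet h]
        simp
    let e : (Fin n → ℝ) ≃ₗ[ℝ] (Fin n → ℝ) :=
      LinearEquiv.ofLinear (Matrix.toLin' (T h)) (Matrix.toLin' (T h⁻¹))
        (by rw [← Matrix.toLin'_mul, hinv, Matrix.toLin'_one])
        (by rw [← Matrix.toLin'_mul, hinv', Matrix.toLin'_one])
    have hemb : MeasurableEmbedding (Matrix.toLin' (T h)) := by
      let me : MeasurableEquiv (Fin n → ℝ) (Fin n → ℝ) :=
        { toEquiv := e.toEquiv
          measurable_toFun := (Matrix.toLin' (T h)).continuous_of_finiteDimensional.measurable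
          measurable_invFun := (Matrix.toLin' (T h⁻¹)).continuous_of_finiteDimensional.measurable }
      exact me.measurableEmbedding
    have := hmp.integral_comp hemb F
    simpa [Matrix.toLin'_apply] using this
  -- same for real-valued functions
  have keyR : ∀ (h : G) (F : (Fin n → ℝ) → ℝ),
      ∫ x : Fin n → ℝ, F ((T h).mulVec x) = ∫ x : Fin n → ℝ, F x := by
    intro h F
    have hmp : MeasurePreserving (Matrix.toLin' (T h)) volume volume := by
      constructor
      · exact (Matrix.toLin' (T h)).continuous_of_finiteDimensional.measurable
      · rw [Real.map_matrix_volume_pi_eq_smul_volume_pi (hdet0 h)]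
        rw [abs_inv, hdet h]
        simp
    let e : (Fin n → ℝ) ≃ₗ[ℝ] (Fin n → ℝ) :=
      LinearEquiv.ofLinear (Matrix.toLin' (T h)) (Matrix.toLin' (T h⁻¹))
        (by rw [← Matrix.toLin'_mul, hinv, Matrix.toLin'_one])
        (by rw [← Matrix.toLin'_mul, hinv', Matrix.toLin'_one])
    have hemb : MeasurableEmbedding (Matrix.toLin' (T h)) := by
      let me : MeasurableEquiv (Fin n → ℝ) (Fin n → ℝ) :=
        { toEquiv := e.toEquiv
          measurable_toFun := (Matrix.toLin' (T h)).continuous_of_finiteDimensional.measurable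
          measurable_invFun := (Matrix.toLin' (T h⁻¹)).continuous_of_finiteDimensional.measurable }
      exact me.measurableEmbedding
    have := hmp.integral_comp hemb F
    simpa [Matrix.toLin'_apply] using this
  -- continuous linear equiv for T g⁻¹ to pull out of the integral
  set eg : (Fin n → ℝ) ≃ₗ[ℝ] (Fin n → ℝ) :=
    LinearEquiv.ofLinear (Matrix.toLin' (T g⁻¹)) (Matrix.toLin' (T g))
      (by rw [← Matrix.toLin'_mul, hinv', Matrix.toLin'_one])
      (by rw [← Matrix.toLin'_mul, hinv, Matrix.toLin'_one]) with heg
  rw [hf, hf]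
  -- rewrite both integrals via change of variables x = T g⁻¹ u
  have h1 : (∫ x : Fin n → ℝ, ℓ y ((A * T g).mulVec x) * pA (A * T g) * px x)
      = ∫ x : Fin n → ℝ, ℓ y (A.mulVec x) * pA A * px x := by
    rw [← keyR g⁻¹ (fun x => ℓ y ((A * T g).mulVec x) * pA (A * T g) * px x)]
    congr 1
    funext x
    rw [hpA, Matrix.mulVec_mulVec, Matrix.mul_assoc, hinv, Matrix.mul_one, hpx]
  have h2 : (∫ x : Fin n → ℝ, (ℓ y ((A * T g).mulVec x) * pA (A * T g) * px x) • x)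
      = (T g⁻¹).mulVec (∫ x : Fin n → ℝ, (ℓ y (A.mulVec x) * pA A * px x) • x) := by
    rw [← key g⁻¹ (fun x => (ℓ y ((A * T g).mulVec x) * pA (A * T g) * px x) • x)]
    have hcong : (fun x : Fin n → ℝ =>
        (ℓ y ((A * T g).mulVec ((T g⁻¹).mulVec x)) * pA (A * T g) * px ((T g⁻¹).mulVec x)) •
          ((T g⁻¹).mulVec x))
        = fun x : Fin n → ℝ =>
          eg.toContinuousLinearEquiv ((ℓ y (A.mulVec x) * pA A * px x) • x) := by
      funext x
      rw [hpA, Matrix.mulVec_mulVec, Matrix.mul_assoc, hinv, Matrix.mul_one, hpx]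
      simp [heg, Matrix.toLin'_apply, Matrix.mulVec_smul]
    calc (∫ x : Fin n → ℝ,
          (ℓ y ((A * T g).mulVec ((T g⁻¹).mulVec x)) * pA (A * T g) * px ((T g⁻¹).mulVec x)) •
            ((T g⁻¹).mulVec x))
        = ∫ x : Fin n → ℝ, eg.toContinuousLinearEquiv ((ℓ y (A.mulVec x) * pA A * px x) • x) := by
          rw [hcong]
      _ = eg.toContinuousLinearEquiv (∫ x : Fin n → ℝ, (ℓ y (A.mulVec x) * pA A * px x) • x) :=
          eg.toContinuousLinearEquiv.integral_comp_comm _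
      _ = (T g⁻¹).mulVec (∫ x : Fin n → ℝ, (ℓ y (A.mulVec x) * pA A * px x) • x) := by
          simp [heg, Matrix.toLin'_apply]
  rw [h1, h2, Matrix.mulVec_smul]
end
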